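/- arXiv:2011.10436 — 5 statements merged into one kernel-verified Lean document; each statement's English description precedes it below -/
import Mathlib

section
/- For every n ≥ 3 and every ℓ ≥ 1, the set agreement valency task on χ^ℓ(σ) is (n−1)-locally solvable in one round: for every simplex τ ∈ χ^ℓ(σ) there exists a coloring c_τ of χ^{ℓ+1}(σ) with values in {0,…,n−1} that is consistent and complete with the set agreement valency map val on χ^ℓ(σ), and such that no simplex of χ(τ) receives n distinct values under c_τ. -/
open scoped Classical

/-- Vertices of the ℓ-th chromatic subdivision of the standard simplex on `Fin n`. -/
def ChromV (n : ℕ) : ℕ → Type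
  | 0 => Fin n
  | ℓ + 1 => Fin n × Finset (ChromV n ℓ)

instance chromVDecEq (n : ℕ) : ∀ ℓ, DecidableEq (ChromV n ℓ)
  | 0 => inferInstanceAs (DecidableEq (Fin n))
  | ℓ + 1 =>
    letI := chromVDecEq n ℓ
    inferInstanceAs (DecidableEq (Fin n × Finset (ChromV n ℓ)))

/-- The color of a vertex of the ℓ-th chromatic subdivision. -/
def chromCol (n : ℕ) : ∀ ℓ, ChromV n ℓ → Fin n
  | 0, v => v
  | _ + 1, v => v.1

/-- `ids γ`: the set of colors of the vertices of a simplex `γ`. -/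
def ids {n ℓ : ℕ} (γ : Finset (ChromV n ℓ)) : Finset (Fin n) :=
  γ.image (chromCol n ℓ)

/-- One step of standard chromatic subdivision of a set of (nonempty) simplexes. -/
def subdiv {α : Type} {n : ℕ} (col : α → Fin n) (K : Set (Finset α)) :
    Set (Finset (Fin n × Finset α)) :=
  { s | s.Nonempty ∧
    (∀ v ∈ s, v.2 ∈ K ∧ v.1 ∈ v.2.image col) ∧
    (∀ u ∈ s, ∀ v ∈ s, u ≠ v → u.1 ≠ v.1) ∧
    (∀ u ∈ s, ∀ v ∈ s, u.2 ⊆ v.2 ∨ v.2 ⊆ u.2) ∧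
    (∀ u ∈ s, ∀ v ∈ s, u.1 ∈ v.2.image col → u.2 ⊆ v.2) }

/-- The faces of a simplex `τ`: its nonempty subsets. -/
def facesOf {α : Type} (τ : Finset α) : Set (Finset α) :=
  { s | s.Nonempty ∧ s ⊆ τ }

/-- The ℓ-th chromatic subdivision `χ^ℓ(ρ)` of a face `ρ` of σ,
as a subcomplex of `χ^ℓ(σ)`. -/
def chromSub (n : ℕ) (ρ : Finset (Fin n)) : ∀ ℓ, Set (Finset (ChromV n ℓ))
  | 0 => facesOf ρ
  | ℓ + 1 => subdiv (chromCol n ℓ) (chromSub n ρ ℓ)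

/-- Iterated chromatic subdivision of a subcomplex sitting at level ℓ. -/
def iterSub (n ℓ : ℕ) : ∀ m, Set (Finset (ChromV n ℓ)) → Set (Finset (ChromV n (ℓ + m)))
  | 0, K => K
  | m + 1, K => subdiv (chromCol n (ℓ + m)) (iterSub n ℓ m K)

/-- `χ^m(τ)` for a simplex `τ ∈ χ^ℓ(σ)`: the subcomplex of `χ^{ℓ+m}(σ)` obtained by
iterated subdivision of `τ` and its faces. -/
def subOf {n ℓ : ℕ} (m : ℕ) (τ : Finset (ChromV n ℓ)) : Set (Finset (ChromV n (ℓ + m))) :=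
  iterSub n ℓ m (facesOf τ)

/-- The vertices of a subcomplex. -/
def vertexSet {n ℓ : ℕ} (L : Set (Finset (ChromV n ℓ))) : Set (ChromV n ℓ) :=
  { v | ∃ s ∈ L, v ∈ s }

/-- `c(L)`: the set of values taken by a coloring `c` on the vertices of a subcomplex `L`. -/
def colorSet {n ℓ : ℕ} {β : Type} (c : ChromV n ℓ → β) (L : Set (Finset (ChromV n ℓ))) :
    Set β :=
  c '' vertexSet L

/-- The carrier of a simplex `γ ∈ χ^ℓ(σ)`: the smallest face `ρ` of σ with `γ ∈ χ^ℓ(ρ)`,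
realized as the intersection of all such faces. -/
noncomputable def carr {n ℓ : ℕ} (γ : Finset (ChromV n ℓ)) : Finset (Fin n) :=
  Finset.univ.filter fun i => ∀ ρ : Finset (Fin n), γ ∈ chromSub n ρ ℓ → i ∈ ρ

/-- The set agreement valency map: `val(τ) = ids(τ)` if `|τ| ≤ n-2`, else `carr(τ)`. -/
noncomputable def saVal {n ℓ : ℕ} (τ : Finset (ChromV n ℓ)) : Finset (Fin n) :=
  if τ.card ≤ n - 2 then ids τ else carr τ

/-- The weak symmetry breaking valency map: `{1}` on simplexes of dimension ≤ n-3,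
`{0,1}` otherwise. -/
def wsbVal {n ℓ : ℕ} (τ : Finset (ChromV n ℓ)) : Set (Fin 2) :=
  if τ.card ≤ n - 2 then {1} else Set.univ

/-- The simplicial map on the ℓ-th chromatic subdivision induced functorially by a
map `f` on the colors/vertices of σ. -/
def vmap (n : ℕ) (f : Fin n → Fin n) : ∀ ℓ, ChromV n ℓ → ChromV n ℓ
  | 0, v => f v
  | ℓ + 1, v => (f v.1, v.2.image (vmap n f ℓ))

/-- The order-preserving bijection between two faces `s` and `t` of σ of the same
cardinality (extended by the identity elsewhere). -/
noncomputable def opBij {n : ℕ} (s t : Finset (Fin n)) (i : Fin n) : Fin n :=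
  if h : i ∈ s ∧ s.card = t.card then
    ↑(t.orderIsoOfFin rfl (Fin.cast h.2 ((s.orderIsoOfFin rfl).symm ⟨i, h.1⟩)))
  else i

/-- A coloring of `χ^L(σ)` is symmetric if it is invariant under the order-preserving
simplicial bijections between subdivided faces of σ of the same dimension. -/
def SymmColoring {n L : ℕ} {β : Type} (b : ChromV n L → β) : Prop :=
  ∀ s t : Finset (Fin n), s.Nonempty → t.Nonempty → s ≠ t → s.card = t.card →
    ∀ v ∈ vertexSet (chromSub n s L), b (vmap n (opBij s t) L v) = b v

/-- Transport of vertices along an equality of levels. -/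
def castV (n : ℕ) {a b : ℕ} (h : a = b) : ChromV n a → ChromV n b :=
  fun v => h ▸ v


/-! ### Auxiliary lemmas for the construction -/

section SAAux

open Finset

lemma ids_mono {n ℓ : ℕ} {γ γ' : Finset (ChromV n ℓ)} (h : γ ⊆ γ') : ids γ ⊆ ids γ' :=
  Finset.image_subset_image h

lemma mem_ids_of_mem {n ℓ : ℕ} {γ : Finset (ChromV n ℓ)} {v : ChromV n ℓ} (h : v ∈ γ) :
    chromCol n ℓ v ∈ ids γ := Finset.mem_image_of_mem _ h

/-- Colors of a simplex of `χ^ℓ(ρ)` lie in `ρ`. -/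
lemma ids_subset_of_mem {n : ℕ} {ρ : Finset (Fin n)} :
    ∀ {ℓ : ℕ} {γ : Finset (ChromV n ℓ)}, γ ∈ chromSub n ρ ℓ → ids γ ⊆ ρ := by
  intro ℓ
  induction ℓ with
  | zero =>
    intro γ hγ x hx
    obtain ⟨v, hv, rfl⟩ := Finset.mem_image.1 hx
    exact hγ.2 hv
  | succ ℓ ih =>
    intro γ hγ x hx
    simp only [ids] at hx
    obtain ⟨v, hv, rfl⟩ := Finset.mem_image.1 hx
    obtain ⟨h2, -, -, -⟩ := hγ.2
    obtain ⟨hK, hcol⟩ := h2 v hv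
    exact ih hK hcol

lemma ids_subset_carr {n ℓ : ℕ} (γ : Finset (ChromV n ℓ)) : ids γ ⊆ carr γ := by
  intro i hi
  simp only [carr, Finset.mem_filter, Finset.mem_univ, true_and]
  intro ρ hρ
  exact ids_subset_of_mem hρ hi

/-- Colors are injective on a simplex of a subdivision. -/
lemma injOn_col_of_mem {n ℓ : ℕ} {ρ : Finset (Fin n)} {γ : Finset (ChromV n (ℓ+1))}
    (h : γ ∈ chromSub n ρ (ℓ+1)) : Set.InjOn (chromCol n (ℓ+1)) ↑γ := by
  obtain ⟨-, -, hinj, -, -⟩ := h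
  intro u hu v hv he
  by_contra hne
  exact hinj u hu v hv hne he

lemma card_ids_of_subset {n ℓ : ℕ} {ρ : Finset (Fin n)} {τ' γ : Finset (ChromV n (ℓ+1))}
    (h : τ' ∈ chromSub n ρ (ℓ+1)) (hγ : γ ⊆ τ') : (ids γ).card = γ.card :=
  Finset.card_image_of_injOn <| (injOn_col_of_mem h).mono (by exact_mod_cast hγ)

/-- Characterization of the vertices of `χ(τ')`. -/
lemma mem_vertexSet_subOf_iff {n ℓ : ℕ} {τ' : Finset (ChromV n ℓ)}
    {v : Fin n × Finset (ChromV n ℓ)} :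
    v ∈ vertexSet (subOf 1 τ') ↔ v.2.Nonempty ∧ v.2 ⊆ τ' ∧ v.1 ∈ ids v.2 := by
  constructor
  · rintro ⟨s, hs, hv⟩
    obtain ⟨-, h2, -, -, -⟩ := hs
    obtain ⟨hK, hcol⟩ := h2 v hv
    exact ⟨hK.1, hK.2, hcol⟩
  · rintro ⟨h1, h2, h3⟩
    refine ⟨{v}, ⟨⟨v, Finset.mem_singleton_self v⟩, ?_, ?_, ?_, ?_⟩, Finset.mem_singleton_self v⟩
    · intro u hu
      replace hu := Finset.mem_singleton.1 hu
      subst hu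
      exact ⟨⟨h1, h2⟩, h3⟩
    · intro u hu w hw hne
      replace hu := Finset.mem_singleton.1 hu; replace hw := Finset.mem_singleton.1 hw
      subst hu; subst hw; exact absurd rfl hne
    · intro u hu w hw
      replace hu := Finset.mem_singleton.1 hu; replace hw := Finset.mem_singleton.1 hw
      subst hu; subst hw; exact Or.inl (subset_refl _)
    · intro u hu w hw _
      replace hu := Finset.mem_singleton.1 hu; replace hw := Finset.mem_singleton.1 hw
      subst hu; subst hw; exact subset_refl _

end SAAux

/-! ### The coloring rule -/

noncomputable def minIds {n ℓ : ℕ} (γ : Finset (ChromV n ℓ)) (fb : Fin n) : Fin n :=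
  if h : (ids γ).Nonempty then (ids γ).min' h else fb

noncomputable def piV {n ℓ : ℕ} (j0 : Fin n) (γ : Finset (ChromV n ℓ)) : Fin n :=
  if h : (ids γ \ {j0}).Nonempty then (ids γ \ {j0}).min' h else j0

noncomputable def eMiss {n ℓ : ℕ} (γ : Finset (ChromV n ℓ)) (fb : Fin n) : Fin n :=
  if h : (carr γ \ ids γ).Nonempty then (carr γ \ ids γ).min' h else minIds γ fb

noncomputable def ruleC (n ℓ : ℕ) (j0 : Fin n) (v : Fin n × Finset (ChromV n ℓ)) : Fin n :=
  if v.2.card ≤ n - 2 then minIds v.2 v.1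
  else if v.2.card = n - 1 then
    (if carr v.2 = Finset.univ then (if v.1 = piV j0 v.2 then eMiss v.2 v.1 else j0)
     else minIds v.2 v.1)
  else j0

lemma minIds_mem {n ℓ : ℕ} {γ : Finset (ChromV n ℓ)} (h : γ.Nonempty) (fb : Fin n) :
    minIds γ fb ∈ ids γ := by
  have hne : (ids γ).Nonempty := h.image _
  rw [minIds, dif_pos hne]
  exact Finset.min'_mem _ hne


lemma piV_mem {n ℓ : ℕ} (hn : 3 ≤ n) (j0 : Fin n) {γ : Finset (ChromV n ℓ)}
    (h : 2 ≤ (ids γ).card) : piV j0 γ ∈ ids γ \ {j0} := by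
  have hne : (ids γ \ {j0}).Nonempty := by
    rw [← Finset.card_pos]
    have h2 := Finset.card_le_card_sdiff_add_card (s := ids γ) (t := {j0})
    have h3 : ({j0} : Finset (Fin n)).card = 1 := Finset.card_singleton j0
    omega
  rw [piV, dif_pos hne]
  exact Finset.min'_mem _ hne

/-- Completeness (hence also consistency) of the rule coloring. -/
lemma ruleC_complete {n L : ℕ} (hn : 3 ≤ n) (j0 : Fin n)
    {τ' : Finset (ChromV n (L+1))} (hτ' : τ' ∈ chromSub n Finset.univ (L+1)) :
    colorSet (fun v : ChromV n (L+1+1) => ruleC n (L+1) j0 v) (subOf 1 τ') = ↑(saVal τ') := by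
  have hτne : τ'.Nonempty := hτ'.1
  have hτpos : 1 ≤ τ'.card := Finset.card_pos.2 hτne
  have hdist : (ids τ').card = τ'.card := card_ids_of_subset hτ' (subset_refl _)
  have hcard_le : τ'.card ≤ n := by
    have := Finset.card_le_univ (ids τ')
    rw [Fintype.card_fin] at this
    omega
  -- singleton vertices give every color of ids τ'
  have hsing : ∀ x ∈ ids τ', ∃ v : Fin n × Finset (ChromV n (L+1)),
      v ∈ vertexSet (subOf 1 τ') ∧ ruleC n (L+1) j0 v = x := by
    intro x hx
    obtain ⟨w, hw, rfl⟩ := Finset.mem_image.1 hx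
    have hids_w : ids ({w} : Finset (ChromV n (L+1))) = {chromCol n (L+1) w} := by
      simp [ids]
    refine ⟨(chromCol n (L+1) w, {w}), ?_, ?_⟩
    · exact mem_vertexSet_subOf_iff.2 ⟨Finset.singleton_nonempty w,
        Finset.singleton_subset_iff.2 hw, by rw [hids_w]; exact Finset.mem_singleton_self _⟩
    · have h1 : ({w} : Finset (ChromV n (L+1))).card ≤ n - 2 := by
        rw [Finset.card_singleton]; omega
      show ruleC n (L+1) j0 (chromCol n (L+1) w, {w}) = chromCol n (L+1) w
      rw [ruleC, if_pos h1, minIds, dif_pos (by rw [hids_w]; exact Finset.singleton_nonempty _)]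
      simp only [hids_w]
      exact Finset.min'_singleton _
  ext x
  simp only [colorSet, Set.mem_image, Finset.coe_mem, Finset.mem_coe]
  constructor
  · rintro ⟨v, hv, rfl⟩
    obtain ⟨h1, h2, h3⟩ := mem_vertexSet_subOf_iff.1 hv
    show ruleC n (L+1) j0 v ∈ ↑(saVal τ')
    have hvcard : v.2.card ≤ τ'.card := Finset.card_le_card h2
    by_cases hA : τ'.card ≤ n - 2
    · -- saVal = ids τ'
      have hsm : v.2.card ≤ n - 2 := le_trans hvcard hA
      have : ruleC n (L+1) j0 v = minIds v.2 v.1 := by unfold ruleC; rw [if_pos hsm]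
      rw [saVal, if_pos hA, this]
      exact Finset.mem_coe.2 (ids_mono h2 (minIds_mem h1 v.1))
    · rw [saVal, if_neg hA]
      rcases Nat.lt_or_ge τ'.card n with hBn | hCn
      · -- τ'.card = n - 1
        have hB : τ'.card = n - 1 := by omega
        by_cases hsm : v.2.card ≤ n - 2
        · have : ruleC n (L+1) j0 v = minIds v.2 v.1 := by unfold ruleC; rw [if_pos hsm]
          rw [this]
          exact Finset.mem_coe.2 (ids_subset_carr τ' (ids_mono h2 (minIds_mem h1 v.1)))
        · have hvc : v.2.card = n - 1 := by omega
          have hveq : v.2 = τ' := Finset.eq_of_subset_of_card_le h2 (by omega)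
          by_cases hcu : carr v.2 = Finset.univ
          · by_cases hpi : v.1 = piV j0 v.2
            · have : ruleC n (L+1) j0 v = eMiss v.2 v.1 := by
                unfold ruleC; rw [if_neg hsm, if_pos hvc, if_pos hcu, if_pos hpi]
              rw [this, eMiss]
              split
              · next hne2 =>
                rw [← hveq]
                exact Finset.mem_coe.2 (Finset.sdiff_subset (Finset.min'_mem _ hne2))
              · rw [← hveq]
                exact Finset.mem_coe.2 (ids_subset_carr _ (minIds_mem h1 v.1))
            · have : ruleC n (L+1) j0 v = j0 := by
                unfold ruleC; rw [if_neg hsm, if_pos hvc, if_pos hcu, if_neg hpi]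
              rw [this, ← hveq, hcu]
              exact Finset.mem_coe.2 (Finset.mem_univ _)
          · have : ruleC n (L+1) j0 v = minIds v.2 v.1 := by
              unfold ruleC; rw [if_neg hsm, if_pos hvc, if_neg hcu]
            rw [this, ← hveq]
            exact Finset.mem_coe.2 (ids_subset_carr _ (minIds_mem h1 v.1))
      · -- τ'.card = n : carr τ' = univ
        have hC : τ'.card = n := by omega
        have hidsu : ids τ' = Finset.univ :=
          Finset.eq_univ_of_card _ (by rw [hdist, hC, Fintype.card_fin])
        have hcarru : carr τ' = Finset.univ :=
          Finset.univ_subset_iff.1 (hidsu ▸ ids_subset_carr τ')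
        rw [hcarru]
        exact Finset.mem_coe.2 (Finset.mem_univ _)
  · intro hx
    by_cases hA : τ'.card ≤ n - 2
    · rw [saVal, if_pos hA] at hx
      obtain ⟨v, hv, he⟩ := hsing x (Finset.mem_coe.1 hx)
      exact ⟨v, hv, he⟩
    · rw [saVal, if_neg hA] at hx
      rcases Nat.lt_or_ge τ'.card n with hBn | hCn
      · have hB : τ'.card = n - 1 := by omega
        by_cases hxi : x ∈ ids τ'
        · obtain ⟨v, hv, he⟩ := hsing x hxi
          exact ⟨v, hv, he⟩
        · -- x is the missing color; carr τ' must be univ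
          have hxc : x ∈ carr τ' := Finset.mem_coe.1 hx
          have hcu : carr τ' = Finset.univ := by
            by_contra hne
            have hlt : (carr τ').card < n := by
              have hss : carr τ' ⊂ Finset.univ :=
                Finset.ssubset_univ_iff.2 hne
              have := Finset.card_lt_card hss
              rwa [Finset.card_univ, Fintype.card_fin] at this
            have hsub := ids_subset_carr τ'
            have hle := Finset.card_le_card hsub
            have : ids τ' = carr τ' :=
              Finset.eq_of_subset_of_card_le hsub (by omega)
            exact hxi (this ▸ hxc)
          have hsd : carr τ' \ ids τ' = {x} := by
            have hxm : x ∈ carr τ' \ ids τ' := Finset.mem_sdiff.2 ⟨hxc, hxi⟩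
            have hone : (carr τ' \ ids τ').card = 1 := by
              rw [Finset.card_sdiff_of_subset (ids_subset_carr τ'), hcu, Finset.card_univ,
                Fintype.card_fin, hdist, hB]
              omega
            rw [Finset.eq_singleton_iff_unique_mem]
            exact ⟨hxm, fun z hz => by
              have := Finset.card_le_one.1 (le_of_eq hone) z hz x hxm
              exact this⟩
          have hids2 : 2 ≤ (ids τ').card := by omega
          have hπ := piV_mem hn j0 hids2
          refine ⟨(piV j0 τ', τ'), ?_, ?_⟩
          · exact mem_vertexSet_subOf_iff.2 ⟨hτne, subset_refl _,
              (Finset.mem_sdiff.1 hπ).1⟩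
          · show ruleC n (L+1) j0 (piV j0 τ', τ') = x
            have e1 : ¬ (τ'.card ≤ n - 2) := hA
            rw [ruleC, if_neg e1, if_pos hB, if_pos hcu, if_pos rfl, eMiss,
              dif_pos (by rw [hsd]; exact Finset.singleton_nonempty x)]
            simp only [hsd]
            exact Finset.min'_singleton x
      · have hC : τ'.card = n := by omega
        have hidsu : ids τ' = Finset.univ :=
          Finset.eq_univ_of_card _ (by rw [hdist, hC, Fintype.card_fin])
        obtain ⟨v, hv, he⟩ := hsing x (by rw [hidsu]; exact Finset.mem_univ x)
        exact ⟨v, hv, he⟩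


/-- Locality: no simplex of `χ(τ)` receives `n` distinct values. -/
lemma ruleC_local {n L : ℕ} (hn : 3 ≤ n) (j0 : Fin n)
    {τ : Finset (ChromV n (L+1))} (hτ : τ ∈ chromSub n Finset.univ (L+1))
    (hj0 : τ.card = n → carr (τ.filter fun w => chromCol n (L+1) w ≠ j0) = Finset.univ) :
    ∀ s ∈ subOf 1 τ, (s.image (fun v : ChromV n (L+1+1) => ruleC n (L+1) j0 v)).card < n := by
  intro s hs
  by_contra hge
  push_neg at hge
  obtain ⟨hne, hK, hinj, hchain, hcross⟩ := hs
  set c : ChromV n (L+1+1) → Fin n := fun v => ruleC n (L+1) j0 v with hcdef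
  have hcval : ∀ v : ChromV n (L+1+1), c v = ruleC n (L+1) j0 v := fun v => rfl
  have hface : ∀ v, v ∈ s → v.2.Nonempty ∧ v.2 ⊆ τ ∧ v.1 ∈ ids v.2 := by
    intro v hv
    obtain ⟨hf, hcol⟩ := hK v hv
    exact ⟨hf.1, hf.2, hcol⟩
  have hfstinj : Set.InjOn (fun v : ChromV n (L+1+1) => v.1) ↑s := by
    intro u hu v hv he
    by_contra hne'
    exact hinj u hu v hv hne' he
  have hcards : (s.image (fun v : ChromV n (L+1+1) => v.1)).card = s.card := Finset.card_image_of_injOn hfstinj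
  have himgc : (s.image c).card ≤ s.card := Finset.card_image_le
  have hfst_sub : s.image (fun v : ChromV n (L+1+1) => v.1) ⊆ ids τ := by
    intro x hx
    obtain ⟨v, hv, rfl⟩ := Finset.mem_image.1 hx
    exact ids_mono (hface v hv).2.1 (hface v hv).2.2
  have hτdist : (ids τ).card = τ.card := card_ids_of_subset hτ (subset_refl _)
  have hτlen : τ.card ≤ n := by
    have := Finset.card_le_univ (ids τ)
    rw [Fintype.card_fin] at this
    omega
  have h2 : s.card ≤ (ids τ).card := hcards ▸ Finset.card_le_card hfst_sub
  have hτn : τ.card = n := by omega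
  have hsn : s.card = n := by omega
  have hcimg : (s.image c).card = n := by omega
  have hcinj : Set.InjOn c ↑s := Finset.card_image_iff.1 (by omega)
  have hfstuniv : s.image (fun v : ChromV n (L+1+1) => v.1) = Finset.univ :=
    Finset.eq_univ_of_card _ (by rw [hcards, hsn, Fintype.card_fin])
  have hcuniv : s.image c = Finset.univ :=
    Finset.eq_univ_of_card _ (by rw [hcimg, Fintype.card_fin])
  have hidsτu : ids τ = Finset.univ :=
    Finset.eq_univ_of_card _ (by rw [hτdist, hτn, Fintype.card_fin])
  -- cardinality of ids of subfaces
  have hcard_ids : ∀ v, v ∈ s → (ids v.2).card = v.2.card := by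
    intro v hv
    exact card_ids_of_subset hτ (hface v hv).2.1
  -- the top vertex
  obtain ⟨ut, hut, hmax⟩ := Finset.exists_max_image s (fun v => v.2.card) hne
  have htop : ∀ w, w ∈ s → w.2 ⊆ ut.2 := by
    intro w hw
    rcases hchain ut hut w hw with h | h
    · rw [Finset.eq_of_subset_of_card_le h (hmax w hw)]
    · exact h
  have hidsut : ids ut.2 = Finset.univ := by
    rw [← Finset.univ_subset_iff, ← hfstuniv]
    intro x hx
    obtain ⟨w, hw, rfl⟩ := Finset.mem_image.1 hx
    exact ids_mono (htop w hw) (hface w hw).2.2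
  have hut2 : ut.2 = τ := by
    refine Finset.eq_of_subset_of_card_le (hface ut hut).2.1 ?_
    have h' : (ids ut.2).card ≤ ut.2.card := Finset.card_image_le
    rw [hidsut, Finset.card_univ, Fintype.card_fin] at h'
    omega
  have hval_top : ∀ u, u ∈ s → u.2 = τ → c u = j0 := by
    intro u hu h2'
    have e1 : ¬ (u.2.card ≤ n - 2) := by rw [h2', hτn]; omega
    have e2 : ¬ (u.2.card = n - 1) := by rw [h2', hτn]; omega
    rw [hcval]; unfold ruleC; rw [if_neg e1, if_neg e2]
  have hcut : c ut = j0 := hval_top ut hut hut2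
  have huniq : ∀ u, u ∈ s → u.2 = τ → u = ut := by
    intro u hu h2'
    exact hcinj hu hut ((hval_top u hu h2').trans hcut.symm)
  set j := ut.1 with hjdef
  have hclaim1 : ∀ u, u ∈ s → u ≠ ut → j ∉ ids u.2 := by
    intro u hu hne' hmem
    have hsub : ut.2 ⊆ u.2 := hcross ut hut u hu hmem
    have : u.2 = τ := Finset.Subset.antisymm (hface u hu).2.1 (hut2 ▸ hsub)
    exact hne' (huniq u hu this)
  have hcard_lt : ∀ u, u ∈ s → u ≠ ut → u.2.card ≤ n - 1 := by
    intro u hu hne'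
    have hne2 : u.2 ≠ τ := fun h => hne' (huniq u hu h)
    have hss : u.2 ⊂ τ := Finset.ssubset_iff_subset_ne.2 ⟨(hface u hu).2.1, hne2⟩
    have := Finset.card_lt_card hss
    omega
  -- case analysis on the value of a non-top vertex
  have hval_cases : ∀ u, u ∈ s → u ≠ ut →
      c u ∈ ids u.2 ∨
      (u.2.card = n - 1 ∧ carr u.2 = Finset.univ ∧
        ((u.1 = piV j0 u.2 ∧ c u = eMiss u.2 u.1) ∨ c u = j0)) := by
    intro u hu hneu
    have hlt := hcard_lt u hu hneu
    by_cases hsm : u.2.card ≤ n - 2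
    · left
      rw [hcval]; unfold ruleC; rw [if_pos hsm]
      exact minIds_mem (hface u hu).1 u.1
    · have hc1 : u.2.card = n - 1 := by omega
      by_cases hcu : carr u.2 = Finset.univ
      · right
        refine ⟨hc1, hcu, ?_⟩
        by_cases hpi : u.1 = piV j0 u.2
        · exact Or.inl ⟨hpi, by rw [hcval]; unfold ruleC; rw [if_neg hsm, if_pos hc1, if_pos hcu, if_pos hpi]⟩
        · exact Or.inr (by rw [hcval]; unfold ruleC; rw [if_neg hsm, if_pos hc1, if_pos hcu, if_neg hpi])
      · left
        rw [hcval]; unfold ruleC; rw [if_neg hsm, if_pos hc1, if_neg hcu]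
        exact minIds_mem (hface u hu).1 u.1
  by_cases hjj : j = j0
  · -- Case A : the top vertex has color j0
    have hsne : (s.erase ut).Nonempty := by
      rw [← Finset.card_pos, Finset.card_erase_of_mem hut, hsn]
      omega
    obtain ⟨u', hu'e, hmax'⟩ := Finset.exists_max_image (s.erase ut) (fun v => v.2.card) hsne
    have hu's : u' ∈ s := Finset.mem_of_mem_erase hu'e
    have hu'ne : u' ≠ ut := Finset.ne_of_mem_erase hu'e
    have hsub' : ∀ w, w ∈ s.erase ut → w.2 ⊆ u'.2 := by
      intro w hw
      rcases hchain u' hu's w (Finset.mem_of_mem_erase hw) with h | h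
      · rw [Finset.eq_of_subset_of_card_le h (hmax' w hw)]
      · exact h
    have himg_erase : (s.erase ut).image (fun v : ChromV n (L+1+1) => v.1) = Finset.univ.erase j := by
      ext x
      constructor
      · intro hx
        obtain ⟨w, hw, rfl⟩ := Finset.mem_image.1 hx
        refine Finset.mem_erase.2 ⟨?_, Finset.mem_univ _⟩
        exact hinj w (Finset.mem_of_mem_erase hw) ut hut (Finset.ne_of_mem_erase hw)
      · intro hx
        obtain ⟨hxj, -⟩ := Finset.mem_erase.1 hx
        have : x ∈ s.image (fun v : ChromV n (L+1+1) => v.1) := by rw [hfstuniv]; exact Finset.mem_univ x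
        obtain ⟨w, hw, rfl⟩ := Finset.mem_image.1 this
        refine Finset.mem_image_of_mem _ (Finset.mem_erase.2 ⟨?_, hw⟩)
        intro h
        exact hxj (by rw [h])
    have hids' : ids u'.2 = Finset.univ.erase j := by
      apply Finset.Subset.antisymm
      · intro y hy
        refine Finset.mem_erase.2 ⟨fun h => hclaim1 u' hu's hu'ne (h ▸ hy), Finset.mem_univ y⟩
      · rw [← himg_erase]
        intro x hx
        obtain ⟨w, hw, rfl⟩ := Finset.mem_image.1 hx
        exact ids_mono (hsub' w hw) (hface w (Finset.mem_of_mem_erase hw)).2.2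
    have hcard' : u'.2.card = n - 1 := by
      have h1 := hcard_ids u' hu's
      rw [hids', Finset.card_erase_of_mem (Finset.mem_univ j), Finset.card_univ,
        Fintype.card_fin] at h1
      omega
    -- u'.2 is the face of τ missing the color j0
    have hu'γ : u'.2 = τ.filter (fun w => chromCol n (L+1) w ≠ j0) := by
      have hsubγ : u'.2 ⊆ τ.filter (fun w => chromCol n (L+1) w ≠ j0) := by
        intro w hw
        refine Finset.mem_filter.2 ⟨(hface u' hu's).2.1 hw, ?_⟩
        intro hcw
        have : chromCol n (L+1) w ∈ ids u'.2 := mem_ids_of_mem hw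
        rw [hids', hcw, ← hjj] at this
        exact (Finset.mem_erase.1 this).1 rfl
      refine Finset.eq_of_subset_of_card_le hsubγ ?_
      -- card of the filter ≤ n - 1
      have hj0τ : j0 ∈ ids τ := by rw [hidsτu]; exact Finset.mem_univ j0
      obtain ⟨w0, hw0, hcw0⟩ := Finset.mem_image.1 hj0τ
      have hw0f : w0 ∈ τ.filter (fun w => chromCol n (L+1) w = j0) := Finset.mem_filter.2 ⟨hw0, hcw0⟩
      have hcard_pos : 1 ≤ (τ.filter (fun w => chromCol n (L+1) w = j0)).card :=
        Finset.card_pos.2 ⟨w0, hw0f⟩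
      have hsplit : (τ.filter (fun w => chromCol n (L+1) w = j0)).card +
          (τ.filter (fun w => ¬ chromCol n (L+1) w = j0)).card = τ.card :=
        Finset.card_filter_add_card_filter_not (fun w => chromCol n (L+1) w = j0)
      have : (τ.filter (fun w => ¬ chromCol n (L+1) w = j0)).card ≤ n - 1 := by omega
      calc (τ.filter (fun w => chromCol n (L+1) w ≠ j0)).card
          = (τ.filter (fun w => ¬ chromCol n (L+1) w = j0)).card := rfl
        _ ≤ n - 1 := this
        _ = u'.2.card := hcard'.symm
    have hcarr' : carr u'.2 = Finset.univ := by rw [hu'γ]; exact hj0 hτn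
    have hsd : carr u'.2 \ ids u'.2 = {j0} := by
      rw [hcarr', hids', ← hjj]
      ext y
      simp only [Finset.mem_sdiff, Finset.mem_erase, Finset.mem_univ, true_and,
        Finset.mem_singleton, and_true, not_and]
      tauto
    have he' : eMiss u'.2 u'.1 = j0 := by
      rw [eMiss, dif_pos (by rw [hsd]; exact Finset.singleton_nonempty j0)]
      simp only [hsd]
      exact Finset.min'_singleton j0
    have hcu' : c u' = j0 := by
      have e1 : ¬ (u'.2.card ≤ n - 2) := by omega
      rw [hcval]; unfold ruleC; rw [if_neg e1, if_pos hcard', if_pos hcarr']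
      by_cases hpi : u'.1 = piV j0 u'.2
      · rw [if_pos hpi]
        exact he'
      · rw [if_neg hpi]
    exact hu'ne (hcinj hu's hut (hcu'.trans hcut.symm))
  · -- Case B : the top vertex has color j ≠ j0
    have hj_img : j ∈ s.image c := by rw [hcuniv]; exact Finset.mem_univ j
    obtain ⟨uj, huj, hcuj⟩ := Finset.mem_image.1 hj_img
    have hujne : uj ≠ ut := by
      intro h
      rw [h, hcut] at hcuj
      exact hjj hcuj.symm
    have hjnotin : j ∉ ids uj.2 := hclaim1 uj huj hujne
    rcases hval_cases uj huj hujne with hin | ⟨hc1, hcu, hbr⟩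
    · exact hjnotin (hcuj ▸ hin)
    rcases hbr with ⟨hpi, hev⟩ | hj0v
    swap
    · exact hjj (by rw [← hcuj, hj0v])
    -- uj is the special vertex of its face
    have hidsuj : ids uj.2 = Finset.univ.erase j := by
      apply Finset.eq_of_subset_of_card_le
      · intro y hy
        exact Finset.mem_erase.2 ⟨fun h => hjnotin (h ▸ hy), Finset.mem_univ y⟩
      · have h1 := hcard_ids uj huj
        rw [Finset.card_erase_of_mem (Finset.mem_univ j), Finset.card_univ, Fintype.card_fin]
        omega
    have hpmem : piV j0 uj.2 ∈ ids uj.2 \ {j0} := by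
      refine piV_mem hn j0 ?_
      have h1 := hcard_ids uj huj
      omega
    set p := uj.1 with hpdef
    have hp_in : p ∈ ids uj.2 := by
      rw [hpi]
      exact (Finset.mem_sdiff.1 hpmem).1
    have hpne_j0 : p ≠ j0 := by
      rw [hpi]
      have := (Finset.mem_sdiff.1 hpmem).2
      simpa using this
    have hpne_j : p ≠ j := fun h => hjnotin (h ▸ hp_in)
    -- no other vertex sees the color p
    have hpclaim : ∀ u, u ∈ s → u ≠ ut → u ≠ uj → p ∉ ids u.2 := by
      intro u hu hne1 hne2 hmem
      have hsubj : uj.2 ⊆ u.2 := hcross uj huj u hu hmem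
      have hcu2 : u.2.card ≤ n - 1 := hcard_lt u hu hne1
      have hequ : uj.2 = u.2 := Finset.eq_of_subset_of_card_le hsubj (by omega)
      have e1 : ¬ (u.2.card ≤ n - 2) := by rw [← hequ]; omega
      have e2 : u.2.card = n - 1 := by rw [← hequ]; omega
      have e3 : carr u.2 = Finset.univ := by rw [← hequ]; exact hcu
      have e4 : u.1 ≠ piV j0 u.2 := by
        rw [← hequ, ← hpi]
        exact hinj u hu uj huj hne2
      have : c u = j0 := by rw [hcval]; unfold ruleC; rw [if_neg e1, if_pos e2, if_pos e3, if_neg e4]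
      exact hne1 (hcinj hu hut (this.trans hcut.symm))
    -- some vertex has value p; derive the contradiction
    have hp_img : p ∈ s.image c := by rw [hcuniv]; exact Finset.mem_univ p
    obtain ⟨up, hup, hcup⟩ := Finset.mem_image.1 hp_img
    have hupne_t : up ≠ ut := by
      intro h
      rw [h, hcut] at hcup
      exact hpne_j0 hcup.symm
    have hupne_j : up ≠ uj := by
      intro h
      rw [h, hcuj] at hcup
      exact hpne_j hcup.symm
    have hpnot : p ∉ ids up.2 := hpclaim up hup hupne_t hupne_j
    rcases hval_cases up hup hupne_t with hin | ⟨hc1', -, -⟩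
    · exact hpnot (hcup ▸ hin)
    · -- up.2 has card n-1 but its ids misses both j and p
      have hjnot' : j ∉ ids up.2 := hclaim1 up hup hupne_t
      have hsub2 : ids up.2 ⊆ (Finset.univ.erase j).erase p := by
        intro y hy
        exact Finset.mem_erase.2 ⟨fun h => hpnot (h ▸ hy),
          Finset.mem_erase.2 ⟨fun h => hjnot' (h ▸ hy), Finset.mem_univ y⟩⟩
      have hcard2 := Finset.card_le_card hsub2
      have hpe : p ∈ Finset.univ.erase j := Finset.mem_erase.2 ⟨hpne_j, Finset.mem_univ p⟩
      rw [Finset.card_erase_of_mem hpe, Finset.card_erase_of_mem (Finset.mem_univ j),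
        Finset.card_univ, Fintype.card_fin] at hcard2
      have h1 := hcard_ids up hup
      omega

/-- For every n ≥ 3 and ℓ ≥ 1, the set agreement valency task on χ^ℓ(σ)
is (n-1)-locally solvable in one round. -/
theorem set_agreement_valency_task_locally_solvable
    (n ℓ : ℕ) (hn : 3 ≤ n) (hℓ : 1 ≤ ℓ)
    (τ : Finset (ChromV n ℓ)) (hτ : τ ∈ chromSub n Finset.univ ℓ) :
    ∃ c : ChromV n (ℓ + 1) → Fin n,
      (∀ τ' ∈ chromSub n Finset.univ ℓ, colorSet c (subOf 1 τ') ⊆ ↑(saVal τ')) ∧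
      (∀ τ' ∈ chromSub n Finset.univ ℓ, colorSet c (subOf 1 τ') = ↑(saVal τ')) ∧
      (∀ s ∈ subOf 1 τ, (s.image c).card < n) := by
  obtain ⟨L, rfl⟩ : ∃ L, ℓ = L + 1 := ⟨ℓ - 1, by omega⟩
  have hexists : ∃ j0 : Fin n,
      (τ.card = n → carr (τ.filter fun w => chromCol n (L+1) w ≠ j0) = Finset.univ) := by
    by_cases hcard : τ.card = n
    · have hτcopy := hτ
      obtain ⟨hτne, hτK, hτinj, hτchain, hτcross⟩ := hτcopy
      obtain ⟨vs, hvs, hmaxv⟩ := Finset.exists_max_image τ (fun v => v.2.card) hτne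
      have hsubv : ∀ u, u ∈ τ → u.2 ⊆ vs.2 := by
        intro u hu
        rcases hτchain vs hvs u hu with h | h
        · rw [Finset.eq_of_subset_of_card_le h (hmaxv u hu)]
        · exact h
      have hτdist : (ids τ).card = τ.card := card_ids_of_subset hτ (subset_refl _)
      have hidsτu : ids τ = Finset.univ :=
        Finset.eq_univ_of_card _ (by rw [hτdist, hcard, Fintype.card_fin])
      have hidsvs : ids vs.2 = Finset.univ := by
        rw [← Finset.univ_subset_iff, ← hidsτu]
        intro x hx
        obtain ⟨u, hu, rfl⟩ := Finset.mem_image.1 hx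
        exact ids_mono (hsubv u hu) (hτK u hu).2
      refine ⟨⟨if vs.1.val = 0 then 1 else 0, by split <;> omega⟩, fun _ => ?_⟩
      have hβ : vs.1 ≠ (⟨if vs.1.val = 0 then 1 else 0, by split <;> omega⟩ : Fin n) := by
        intro h
        have h' := congrArg Fin.val h
        simp only [] at h'
        split at h' <;> omega
      rw [Finset.eq_univ_iff_forall]
      intro i
      simp only [carr, Finset.mem_filter, Finset.mem_univ, true_and]
      intro ρ hρ
      have hvsf : vs ∈ τ.filter
          (fun w => chromCol n (L+1) w ≠ (⟨if vs.1.val = 0 then 1 else 0, by split <;> omega⟩ : Fin n)) :=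
        Finset.mem_filter.2 ⟨hvs, hβ⟩
      have h1 := (hρ.2.1 vs hvsf).1
      have h2 := ids_subset_of_mem h1
      rw [hidsvs] at h2
      exact h2 (Finset.mem_univ i)
    · exact ⟨⟨0, by omega⟩, fun h => absurd h hcard⟩
  obtain ⟨j0, hj0⟩ := hexists
  refine ⟨fun v : ChromV n (L+1+1) => ruleC n (L+1) j0 v, ?_, ?_, ?_⟩
  · intro τ' hτ'
    exact (ruleC_complete hn j0 hτ').subset
  · intro τ' hτ'
    exact ruleC_complete hn j0 hτ'
  · exact ruleC_local hn j0 hτ hj0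
end

section
/- For every n ≥ 3 there exists a coloring c of χ(σ) with values in {0,…,n−1} such that: (1) for every face ρ′ of σ with dim(ρ′) ≤ n−3, c(χ(ρ′)) = ρ′; (2) for every (n−2)-dimensional face ρ′ of σ, c(χ(ρ′)) = {0,…,n−1}; (3) c(χ(σ)) = {0,…,n−1} and no (n−1)-simplex of χ(σ) receives n distinct values under c. -/
open scoped Classical

/-- The coloring used in the proof: `z` plays the role of the distinguished color 0. -/
noncomputable def myc (n : ℕ) (z : Fin n) : Fin n × Finset (Fin n) → Fin n := fun v =>
  if v.2.card ≤ n - 2 then v.1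
  else if v.1 = z ∨ v.2.card = n then z
  else if h : (v.2)ᶜ.Nonempty then (v.2)ᶜ.min' h else z

lemma myc_small {n : ℕ} {z : Fin n} {v : Fin n × Finset (Fin n)}
    (h : v.2.card ≤ n - 2) : myc n z v = v.1 := if_pos h

lemma myc_univ {n : ℕ} (hn : 3 ≤ n) {z : Fin n} {v : Fin n × Finset (Fin n)}
    (h : v.2.card = n) : myc n z v = z := by
  unfold myc
  rw [if_neg (by omega), if_pos (Or.inr h)]

lemma myc_zval {n : ℕ} {z : Fin n} {v : Fin n × Finset (Fin n)}
    (h : v.1 = z) : myc n z v = z := by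
  unfold myc
  split
  · exact h
  · rw [if_pos (Or.inl h)]

lemma myc_miss {n : ℕ} (hn : 3 ≤ n) {z : Fin n} {v : Fin n × Finset (Fin n)}
    (hc : v.2.card = n - 1) (h1 : v.1 ≠ z) {b : Fin n} (hb : b ∉ v.2) :
    myc n z v = b := by
  have hbc : b ∈ (v.2)ᶜ := Finset.mem_compl.mpr hb
  have hcc : (v.2)ᶜ.card = 1 := by
    rw [Finset.card_compl, hc, Fintype.card_fin]; omega
  obtain ⟨a, ha⟩ := Finset.card_eq_one.mp hcc
  have hab : b = a := by rwa [ha, Finset.mem_singleton] at hbc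
  unfold myc
  rw [if_neg (by omega), if_neg (by simp [h1]; omega), dif_pos ⟨b, hbc⟩]
  exact Finset.card_le_one.mp hcc.le _ (Finset.min'_mem _ ⟨b, hbc⟩) b hbc

lemma mem_vertexSet_iff {n : ℕ} (ρ : Finset (Fin n)) (v : Fin n × Finset (Fin n)) :
    v ∈ vertexSet (chromSub n ρ 1) ↔ v.2.Nonempty ∧ v.2 ⊆ ρ ∧ v.1 ∈ v.2 := by
  have himg : ∀ t : Finset (Fin n), t.image (chromCol n 0) = t := fun t => by
    exact (Finset.image_id : Finset.image (id : Fin n → Fin n) t = t)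
  constructor
  · rintro ⟨s, hs, hv⟩
    obtain ⟨-, h2, -⟩ := hs
    obtain ⟨⟨hne, hsub⟩, hmem⟩ := h2 v hv
    rw [himg] at hmem
    exact ⟨hne, hsub, hmem⟩
  · rintro ⟨hne, hsub, hmem⟩
    refine ⟨{v}, ?_, Finset.mem_singleton_self v⟩
    refine ⟨⟨v, Finset.mem_singleton_self v⟩, ?_, ?_, ?_, ?_⟩
    · intro u hu
      replace hu : u = v := Finset.mem_singleton.mp hu
      subst hu
      exact ⟨⟨hne, hsub⟩, by rw [himg u.2]; exact hmem⟩
    · intro u hu w hw huw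
      replace hu : u = v := Finset.mem_singleton.mp hu; replace hw : w = v := Finset.mem_singleton.mp hw
      exact absurd (hu.trans hw.symm) huw
    · intro u hu w hw
      replace hu : u = v := Finset.mem_singleton.mp hu; replace hw : w = v := Finset.mem_singleton.mp hw
      subst hu; subst hw; exact Or.inl (subset_refl _)
    · intro u hu w hw _
      replace hu : u = v := Finset.mem_singleton.mp hu; replace hw : w = v := Finset.mem_singleton.mp hw
      subst hu; subst hw; exact subset_refl _

lemma norainbow {n : ℕ} (hn : 3 ≤ n) (z : Fin n) (s : Finset (Fin n × Finset (Fin n)))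
    (h2 : ∀ v ∈ s, v.1 ∈ v.2)
    (h3 : ∀ u ∈ s, ∀ v ∈ s, u ≠ v → u.1 ≠ v.1)
    (h4 : ∀ u ∈ s, ∀ v ∈ s, u.2 ⊆ v.2 ∨ v.2 ⊆ u.2)
    (h5 : ∀ u ∈ s, ∀ v ∈ s, u.1 ∈ v.2 → u.2 ⊆ v.2)
    (hcard : s.card = n) : (s.image (myc n z)).card < n := by
  by_contra hge
  push_neg at hge
  have hle : (s.image (myc n z)).card ≤ s.card := Finset.card_image_le
  have hceq : (s.image (myc n z)).card = s.card := by omega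
  have cinj : Set.InjOn (myc n z) ↑s := Finset.card_image_iff.mp hceq
  have finj : Set.InjOn (Prod.fst : Fin n × Finset (Fin n) → Fin n) ↑s := by
    intro u hu v hv h
    by_contra hne
    exact h3 u hu v hv hne h
  have himg : s.image Prod.fst = Finset.univ := by
    apply Finset.eq_univ_of_card
    rw [Finset.card_image_of_injOn finj, hcard, Fintype.card_fin]
  have hsne : s.Nonempty := Finset.card_pos.mp (by omega)
  -- maximal element
  obtain ⟨m, hm, hmax⟩ := Finset.exists_max_image s (fun v => v.2.card) hsne
  have hsub : ∀ u ∈ s, u.2 ⊆ m.2 := by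
    intro u hu
    rcases h4 u hu m hm with h | h
    · exact h
    · rw [Finset.eq_of_subset_of_card_le h (hmax u hu)]
  have hm2 : m.2 = Finset.univ := by
    apply Finset.eq_univ_iff_forall.mpr
    intro i
    have : i ∈ s.image Prod.fst := by rw [himg]; exact Finset.mem_univ i
    obtain ⟨u, hu, hui⟩ := Finset.mem_image.mp this
    exact hsub u hu (hui ▸ h2 u hu)
  have hm2c : m.2.card = n := by rw [hm2, Finset.card_univ, Fintype.card_fin]
  have hcm : myc n z m = z := myc_univ hn hm2c
  -- the vertex with color z is m
  have hm1 : m.1 = z := by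
    have : z ∈ s.image Prod.fst := by rw [himg]; exact Finset.mem_univ z
    obtain ⟨w, hw, hw1⟩ := Finset.mem_image.mp this
    have hcw : myc n z w = z := by
      by_cases h : w.2.card ≤ n - 2
      · rw [myc_small h, hw1]
      · exact myc_zval hw1
    have : w = m := cinj hw hm (hcw.trans hcm.symm)
    rw [← this, hw1]
  -- every other vertex has small carrier
  have key : ∀ u ∈ s, u ≠ m → u.2.card ≤ n - 2 := by
    intro u hu hne
    have hcu : myc n z u ≠ z := fun h => hne (cinj hu hm (h.trans hcm.symm))
    have hu1 : u.1 ≠ z := fun h => h3 u hu m hm hne (h.trans hm1.symm)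
    have hznot : z ∉ u.2 := by
      intro hz2
      have hmu : m.2 ⊆ u.2 := h5 m hm u hu (by rw [hm1]; exact hz2)
      rw [hm2] at hmu
      have : u.2.card = n := by
        rw [Finset.univ_subset_iff.mp hmu, Finset.card_univ, Fintype.card_fin]
      exact hcu (myc_univ hn this)
    by_contra hbig
    push_neg at hbig
    have hsube : u.2 ⊆ Finset.univ.erase z := by
      intro x hx
      exact Finset.mem_erase.mpr ⟨fun h => hznot (h ▸ hx), Finset.mem_univ x⟩
    have hec : (Finset.univ.erase z).card = n - 1 := by
      rw [Finset.card_erase_of_mem (Finset.mem_univ z), Finset.card_univ, Fintype.card_fin]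
    have hc2 : u.2.card = n - 1 := by
      have := Finset.card_le_card hsube
      omega
    exact hcu (myc_miss hn hc2 hu1 hznot)
  -- contradiction via the second largest
  have htne : (s.erase m).Nonempty := by
    rw [← Finset.card_pos, Finset.card_erase_of_mem hm, hcard]
    omega
  obtain ⟨M, hM, hMmax⟩ := Finset.exists_max_image (s.erase m) (fun v => v.2.card) htne
  have hMs : M ∈ s := Finset.mem_of_mem_erase hM
  have hMne : M ≠ m := Finset.ne_of_mem_erase hM
  have hsubM : ∀ u ∈ s.erase m, u.2 ⊆ M.2 := by
    intro u hu
    rcases h4 u (Finset.mem_of_mem_erase hu) M hMs with h | h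
    · exact h
    · rw [Finset.eq_of_subset_of_card_le h (hMmax u hu)]
  have hbig : Finset.univ.erase z ⊆ M.2 := by
    intro i hi
    obtain ⟨hiz, -⟩ := Finset.mem_erase.mp hi
    have : i ∈ s.image Prod.fst := by rw [himg]; exact Finset.mem_univ i
    obtain ⟨u, hu, hui⟩ := Finset.mem_image.mp this
    have hum : u ≠ m := fun h => hiz (by rw [← hui, h, hm1])
    exact hsubM u (Finset.mem_erase.mpr ⟨hum, hu⟩) (hui ▸ h2 u hu)
  have h1 := Finset.card_le_card hbig
  have hec : (Finset.univ.erase z).card = n - 1 := by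
    rw [Finset.card_erase_of_mem (Finset.mem_univ z), Finset.card_univ, Fintype.card_fin]
  have h2' := key M hMs hMne
  omega

/-- Lemma on colorings of the first chromatic subdivision, case (2.a). -/
theorem exists_coloring_chromSub_one_sa
    (n : ℕ) (hn : 3 ≤ n) :
    ∃ c : ChromV n 1 → Fin n,
      (∀ ρ' : Finset (Fin n), ρ'.Nonempty → ρ'.card ≤ n - 2 →
        colorSet c (chromSub n ρ' 1) = ↑ρ') ∧
      (∀ ρ' : Finset (Fin n), ρ'.card = n - 1 →
        colorSet c (chromSub n ρ' 1) = Set.univ) ∧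
      colorSet c (chromSub n Finset.univ 1) = Set.univ ∧
      (∀ s ∈ chromSub n Finset.univ 1, s.card = n → (s.image c).card < n) := by
  have hzpos : 0 < n := by omega
  set z : Fin n := ⟨0, hzpos⟩ with hzdef
  have hvert : ∀ (ρ : Finset (Fin n)) (b : Fin n), b ∈ ρ →
      myc n z (b, ({b} : Finset (Fin n))) = b ∧
      ((b, ({b} : Finset (Fin n))) : Fin n × Finset (Fin n)) ∈ vertexSet (chromSub n ρ 1) := by
    intro ρ b hb
    constructor
    · exact myc_small (by simp; omega)
    · exact (mem_vertexSet_iff ρ _).mpr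
        ⟨Finset.singleton_nonempty b, Finset.singleton_subset_iff.mpr hb,
          Finset.mem_singleton_self b⟩
  refine ⟨myc n z, ?_, ?_, ?_, ?_⟩
  · -- small faces
    intro ρ hρne hρc
    ext b
    constructor
    · rintro ⟨v, hv, rfl⟩
      obtain ⟨hne, hsub, hmem⟩ := (mem_vertexSet_iff ρ v).mp hv
      have hvc : v.2.card ≤ n - 2 := le_trans (Finset.card_le_card hsub) hρc
      rw [myc_small hvc]
      exact hsub hmem
    · intro hb
      have hb' : b ∈ ρ := hb
      obtain ⟨hval, hmem⟩ := hvert ρ b hb'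
      exact ⟨(b, ({b} : Finset (Fin n))), hmem, hval⟩
  · -- faces of dimension n-2
    intro ρ hρc
    apply Set.eq_univ_iff_forall.mpr
    intro b
    by_cases hb : b ∈ ρ
    · obtain ⟨hval, hmem⟩ := hvert ρ b hb
      exact ⟨(b, ({b} : Finset (Fin n))), hmem, hval⟩
    · have hρne : ρ.Nonempty := Finset.card_pos.mp (by omega)
      have hec : ρ.card - 1 ≤ (ρ.erase z).card := Finset.pred_card_le_card_erase
      have : (ρ.erase z).Nonempty := Finset.card_pos.mp (by omega)
      obtain ⟨a, ha⟩ := this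
      obtain ⟨haz, haρ⟩ := Finset.mem_erase.mp ha
      refine ⟨(a, ρ), (mem_vertexSet_iff ρ _).mpr ⟨hρne, subset_refl ρ, haρ⟩, ?_⟩
      exact myc_miss hn hρc haz hb
  · -- the whole simplex
    apply Set.eq_univ_iff_forall.mpr
    intro b
    obtain ⟨hval, hmem⟩ := hvert Finset.univ b (Finset.mem_univ b)
    exact ⟨(b, ({b} : Finset (Fin n))), hmem, hval⟩
  · -- no rainbow simplex
    intro s hs hcard
    obtain ⟨hne, hmem, h3, h4, h5⟩ := hs
    have himg : ∀ t : Finset (Fin n), t.image (chromCol n 0) = t := fun t => by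
      exact (Finset.image_id : Finset.image (id : Fin n → Fin n) t = t)
    refine norainbow hn z s ?_ h3 h4 ?_ hcard
    · intro v hv
      have := (hmem v hv).2
      rwa [himg] at this
    · intro u hu v hv huv
      exact h5 u hu v hv (by rwa [himg])
end

section
/- Let n ≥ 3 and for i ∈ {0,…,n−1} let ρ_i denote the (n−2)-dimensional face {0,…,n−1}∖{i} of σ. For every i, j ∈ {0,…,n−1} there exists a coloring c of χ(ρ_i) with values in {0,…,n−1} such that: (1) for every proper face ρ′ of ρ_i and every vertex v of χ(ρ′), c(v) equals the color of v; (2) some vertex of χ(ρ_i) has c-value i; (3) no (n−2)-simplex γ of χ(ρ_i) satisfies c(γ) = ρ_j. -/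
open scoped Classical

/-- claim on colorings of `χ(ρ_i)`, where `ρ_i = {0,…,n-1} \ {i}`. -/
theorem exists_coloring_boundary_face
    (n : ℕ) (hn : 3 ≤ n) (i j : Fin n) :
    ∃ c : ChromV n 1 → Fin n,
      (∀ ρ' : Finset (Fin n), ρ'.Nonempty → ρ' ⊂ Finset.univ.erase i →
        ∀ v ∈ vertexSet (chromSub n ρ' 1), c v = chromCol n 1 v) ∧
      (∃ v ∈ vertexSet (chromSub n (Finset.univ.erase i) 1), c v = i) ∧
      (∀ γ ∈ chromSub n (Finset.univ.erase i) 1, γ.card = n - 1 →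
        γ.image c ≠ Finset.univ.erase j) := by
  set ρ : Finset (Fin n) := Finset.univ.erase i with hρ
  have hρcard : ρ.card = n - 1 := by
    simp [hρ, Finset.card_erase_of_mem]
  have hρ2 : 2 ≤ ρ.card := by omega
  -- choose k0 ∈ ρ, k0 ≠ j
  have hk0 : ∃ k0 ∈ ρ, k0 ≠ j := by
    by_contra h
    push_neg at h
    have hsub : ρ ⊆ {j} := fun x hx => Finset.mem_singleton.2 (h x hx)
    have := Finset.card_le_card hsub
    simp at this
    omega
  obtain ⟨k0, hk0ρ, hk0j⟩ := hk0
  -- the coloring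
  refine ⟨fun v : Fin n × Finset (Fin n) =>
    if v.2 = ρ ∧ v.1 ≠ j then i else v.1, ?_, ?_, ?_⟩
  · -- (1) agrees with chromCol on proper faces
    rintro ρ' hρ'ne hρ'ss v ⟨s, hs, hvs⟩
    obtain ⟨-, hmem, -, -, -⟩ := hs
    obtain ⟨hτ, -⟩ := hmem v hvs
    obtain ⟨-, hτsub⟩ := hτ
    have hτne : (v : Fin n × Finset (Fin n)).2 ≠ ρ := by
      intro h
      exact absurd (h ▸ hτsub) (fun hh => (hρ'ss.not_subset) hh)
    dsimp only
    simp [hτne, chromCol]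
    exact fun h => absurd h hτne
  · -- (2) some vertex gets value i
    refine ⟨((k0, ρ) : Fin n × Finset (Fin n)), ⟨({((k0, ρ) : Fin n × Finset (ChromV n 0))} : Finset (Fin n × Finset (ChromV n 0))), ?_, Finset.mem_singleton_self _⟩, ?_⟩
    · refine ⟨⟨_, Finset.mem_singleton_self _⟩, ?_, ?_, ?_, ?_⟩
      · intro v hv
        rw [Finset.mem_singleton] at hv
        subst hv
        exact ⟨⟨⟨k0, hk0ρ⟩, Finset.Subset.refl _⟩, Finset.mem_image.2 ⟨k0, hk0ρ, rfl⟩⟩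
      · intro u hu v hv huv
        rw [Finset.mem_singleton] at hu hv
        exact absurd (hu.trans hv.symm) huv
      · intro u hu v hv
        rw [Finset.mem_singleton] at hu hv
        subst hu; subst hv; exact Or.inl (Finset.Subset.refl _)
      · intro u hu v hv _
        rw [Finset.mem_singleton] at hu hv
        subst hu; subst hv; exact Finset.Subset.refl _
    · show (if ρ = ρ ∧ k0 ≠ j then i else k0) = i
      simp [hk0j]
  · -- (3) no panchromatic simplex colored ρ_j
    rintro γ ⟨hne, hmem, hinj, hchain, -⟩ hcard heq
    -- image of fst is ρ
    have hfst : γ.image (fun v : Fin n × Finset (Fin n) => v.1) = ρ := by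
      have hsub : γ.image (fun v : Fin n × Finset (Fin n) => v.1) ⊆ ρ := by
        intro k hk
        obtain ⟨v, hv, rfl⟩ := Finset.mem_image.1 hk
        obtain ⟨⟨-, hτsub⟩, hcol⟩ := hmem v hv
        obtain ⟨x, hx, rfl⟩ := Finset.mem_image.1 hcol
        exact hτsub hx
      have hcardim : (γ.image (fun v : Fin n × Finset (Fin n) => v.1)).card = γ.card := by
        apply Finset.card_image_of_injOn
        intro u hu v hv huv
        by_contra h
        exact hinj u hu v hv h huv
      exact Finset.eq_of_subset_of_card_le hsub (by rw [hcardim, hcard, hρcard])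
    by_cases hij : i = j
    · -- case i = j : find a central vertex
      subst hij
      -- maximal element of the chain of supports
      obtain ⟨T, hT, hTmax⟩ : ∃ T ∈ γ.image (fun v : Fin n × Finset (Fin n) => v.2),
          ∀ x ∈ γ.image (fun v : Fin n × Finset (Fin n) => v.2), ¬ T < x := by
        obtain ⟨T, hT⟩ := Finset.exists_maximal (hne.image (fun v : Fin n × Finset (Fin n) => v.2))
        exact ⟨T, hT.prop, fun x hx hlt => hT.not_gt hx hlt⟩
      obtain ⟨u, hu, huT⟩ := Finset.mem_image.1 hT
      have hmax : ∀ v ∈ γ, (v : Fin n × Finset (Fin n)).2 ⊆ u.2 := by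
        intro v hv
        rcases hchain v hv u hu with h | h
        · exact h
        · have hnotlt := hTmax _ (Finset.mem_image.2 ⟨v, hv, rfl⟩)
          rw [← huT] at hnotlt
          rcases h.eq_or_ssubset with h' | h'
          · exact h'.ge
          · exact absurd h' hnotlt
      have huρ : (u : Fin n × Finset (Fin n)).2 = ρ := by
        obtain ⟨⟨-, hτsub⟩, -⟩ := hmem u hu
        refine le_antisymm hτsub ?_
        intro k hk
        rw [← hfst] at hk
        obtain ⟨v, hv, rfl⟩ := Finset.mem_image.1 hk
        obtain ⟨-, hcol⟩ := hmem v hv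
        obtain ⟨x, hx, rfl⟩ := Finset.mem_image.1 hcol
        exact hmax v hv hx
      have : i ∈ γ.image (fun v : Fin n × Finset (Fin n) =>
          if v.2 = ρ ∧ v.1 ≠ i then i else v.1) := by
        refine Finset.mem_image.2 ⟨u, hu, ?_⟩
        have hu1 : (u : Fin n × Finset (Fin n)).1 ∈ ρ := by
          rw [← hfst]; exact Finset.mem_image.2 ⟨u, hu, rfl⟩
        have : (u : Fin n × Finset (Fin n)).1 ≠ i := fun h =>
          (Finset.notMem_erase i _) (h ▸ hu1)
        simp [huρ, this]
      exact (Finset.notMem_erase i _) (heq ▸ this)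
    · -- case i ≠ j : j gets color j
      have hjρ : j ∈ ρ := Finset.mem_erase.2 ⟨fun h => hij (h.symm), Finset.mem_univ _⟩
      rw [← hfst] at hjρ
      obtain ⟨w, hw, hw1⟩ := Finset.mem_image.1 hjρ
      have : j ∈ γ.image (fun v : Fin n × Finset (Fin n) =>
          if v.2 = ρ ∧ v.1 ≠ j then i else v.1) := by
        refine Finset.mem_image.2 ⟨w, hw, ?_⟩
        simp [hw1]
      exact (Finset.notMem_erase j _) (heq ▸ this)
end

section
/- For every n ≥ 3 there exists a coloring b of χ(σ) with values in {0,1} such that: (1) for every face ρ′ of σ with dim(ρ′) ≤ n−3, b(χ(ρ′)) = {1}; (2) for every (n−2)-dimensional face ρ′ of σ, b(χ(ρ′)) = {0,1}; (3) b(χ(σ)) = {0,1} and no (n−1)-simplex of χ(σ) is b-monochromatic (i.e., no (n−1)-simplex has all its vertices assigned the same value by b). -/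
open scoped Classical

attribute [reducible] ChromV

-- auxiliary definitions/lemmas (to be inserted above the theorem)

/-- The explicit binary coloring used in the proof. -/
noncomputable def myb (n : ℕ) (v : Fin n × Finset (Fin n)) : Fin 2 :=
  if v.2.card ≤ n - 2 then 1
  else if v.2.card = n then (if (v.1 : ℕ) = 0 then 1 else 0)
  else if ∃ j ∈ v.2, (j : ℕ) = 0 then (if (v.1 : ℕ) = 0 then 0 else 1)
  else 0

lemma myb_small {n : ℕ} (v : Fin n × Finset (Fin n)) (h : v.2.card ≤ n - 2) :
    myb n v = 1 := by simp [myb, h]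

lemma myb_top {n : ℕ} (v : Fin n × Finset (Fin n)) (h3 : 3 ≤ n) (h : v.2.card = n) :
    myb n v = if (v.1 : ℕ) = 0 then 1 else 0 := by
  have h1 : ¬ n ≤ n - 2 := by omega
  simp [myb, h1, h]

lemma myb_mid {n : ℕ} (v : Fin n × Finset (Fin n)) (h3 : 3 ≤ n) (h : v.2.card = n - 1) :
    myb n v = if ∃ j ∈ v.2, (j : ℕ) = 0 then (if (v.1 : ℕ) = 0 then 0 else 1) else 0 := by
  have h1 : ¬ v.2.card ≤ n - 2 := by omega
  have h2 : ¬ v.2.card = n := by omega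
  simp [myb, h1, h2]

lemma chromCol_zero (n : ℕ) : chromCol n 0 = id := rfl

lemma mem_chromSub_one {n : ℕ} (ρ : Finset (Fin n)) (s : Finset (ChromV n 1)) :
    s ∈ chromSub n ρ 1 ↔ s.Nonempty ∧
      (∀ v ∈ s, (v.2.Nonempty ∧ v.2 ⊆ ρ) ∧ v.1 ∈ v.2) ∧
      (∀ u ∈ s, ∀ v ∈ s, u ≠ v → u.1 ≠ v.1) ∧
      (∀ u ∈ s, ∀ v ∈ s, u.2 ⊆ v.2 ∨ v.2 ⊆ u.2) ∧
      (∀ u ∈ s, ∀ v ∈ s, u.1 ∈ v.2 → u.2 ⊆ v.2) := by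
  show s ∈ subdiv (chromCol n 0) (facesOf ρ) ↔ _
  simp only [subdiv, Set.mem_setOf_eq, facesOf, chromCol_zero, Finset.image_id]

lemma singleton_mem_chromSub_one {n : ℕ} {ρ τ : Finset (Fin n)} {i : Fin n}
    (hτ : τ.Nonempty) (hsub : τ ⊆ ρ) (hi : i ∈ τ) :
    ({((i, τ) : ChromV n 1)} : Finset (ChromV n 1)) ∈ chromSub n ρ 1 := by
  rw [mem_chromSub_one]
  refine ⟨Finset.singleton_nonempty _, ?_, ?_, ?_, ?_⟩ <;>
    simp_all [Finset.mem_singleton]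

lemma mem_vertexSet_one {n : ℕ} (ρ : Finset (Fin n)) (v : ChromV n 1) :
    v ∈ vertexSet (chromSub n ρ 1) ↔ v.2.Nonempty ∧ v.2 ⊆ ρ ∧ v.1 ∈ v.2 := by
  constructor
  · rintro ⟨s, hs, hv⟩
    obtain ⟨-, hvert, -⟩ := (mem_chromSub_one ρ s).1 hs
    exact ⟨(hvert v hv).1.1, (hvert v hv).1.2, (hvert v hv).2⟩
  · rintro ⟨h1, h2, h3⟩
    exact ⟨{(v.1, v.2)}, singleton_mem_chromSub_one h1 h2 h3, by simp⟩

def chromVZeroFintype (n : ℕ) : Fintype (ChromV n 0) :=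
  inferInstanceAs (Fintype (Fin n))

section

attribute [local instance] chromVZeroFintype

lemma chromV_zero_card (n : ℕ) : Fintype.card (ChromV n 0) = n :=
  Fintype.card_fin n

end

/-- Lemma on binary colorings of the first chromatic subdivision. -/
theorem exists_binary_coloring_chromSub_one
    (n : ℕ) (hn : 3 ≤ n) :
    ∃ b : ChromV n 1 → Fin 2,
      (∀ ρ' : Finset (Fin n), ρ'.Nonempty → ρ'.card ≤ n - 2 →
        colorSet b (chromSub n ρ' 1) = {1}) ∧
      (∀ ρ' : Finset (Fin n), ρ'.card = n - 1 →
        colorSet b (chromSub n ρ' 1) = Set.univ) ∧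
      colorSet b (chromSub n Finset.univ 1) = Set.univ ∧
      (∀ s ∈ chromSub n Finset.univ 1, s.card = n → ∃ u ∈ s, ∃ v ∈ s, b u ≠ b v) := by
  haveI : NeZero n := ⟨by omega⟩
  refine ⟨fun v => myb n v, ?_, ?_, ?_, ?_⟩
  · -- (1) small faces are monochromatic 1
    intro ρ' hne hcard
    ext x
    simp only [colorSet, Set.mem_image, Set.mem_singleton_iff]
    constructor
    · rintro ⟨v, hv, rfl⟩
      rw [mem_vertexSet_one] at hv
      exact myb_small v (le_trans (Finset.card_le_card hv.2.1) hcard)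
    · rintro rfl
      obtain ⟨i, hi⟩ := hne
      refine ⟨(i, {i}), ?_, ?_⟩
      · rw [mem_vertexSet_one]
        exact ⟨Finset.singleton_nonempty i, Finset.singleton_subset_iff.2 hi,
          Finset.mem_singleton_self i⟩
      · exact myb_small (i, {i}) (by simp only [Finset.card_singleton]; omega)
  · -- (2) (n-2)-dimensional faces get both colors
    intro ρ' hcard
    have hne' : ρ'.Nonempty := Finset.card_pos.1 (by omega)
    apply Set.eq_univ_iff_forall.2
    intro x
    simp only [colorSet, Set.mem_image]
    fin_cases x
    · -- color 0
      by_cases h0 : ∃ j ∈ ρ', (j : ℕ) = 0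
      · obtain ⟨j, hj, hj0⟩ := h0
        refine ⟨(j, ρ'), (mem_vertexSet_one _ _).2 ⟨hne', subset_rfl, hj⟩, ?_⟩
        rw [myb_mid (j, ρ') hn hcard, if_pos ⟨j, hj, hj0⟩, if_pos hj0]
        rfl
      · obtain ⟨i, hi⟩ := hne'
        refine ⟨(i, ρ'), (mem_vertexSet_one _ _).2 ⟨⟨i, hi⟩, subset_rfl, hi⟩, ?_⟩
        rw [myb_mid (i, ρ') hn hcard, if_neg h0]
        rfl
    · -- color 1
      obtain ⟨i, hi⟩ := hne'
      refine ⟨(i, {i}), (mem_vertexSet_one _ _).2 ⟨Finset.singleton_nonempty i,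
        Finset.singleton_subset_iff.2 hi, Finset.mem_singleton_self i⟩, ?_⟩
      rw [myb_small (i, {i}) (by simp only [Finset.card_singleton]; omega)]
      rfl
  · -- (3) the whole complex gets both colors
    apply Set.eq_univ_iff_forall.2
    intro x
    simp only [colorSet, Set.mem_image]
    have huniv : (Finset.univ : Finset (Fin n)).card = n := by
      rw [Finset.card_univ, Fintype.card_fin]
    fin_cases x
    · refine ⟨((⟨1, by omega⟩ : Fin n), (Finset.univ : Finset (Fin n))),
        (mem_vertexSet_one _ _).2 ⟨⟨⟨1, by omega⟩, Finset.mem_univ _⟩, subset_rfl,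
          Finset.mem_univ _⟩, ?_⟩
      rw [myb_top _ hn huniv, if_neg (by simp)]
      rfl
    · refine ⟨((⟨1, by omega⟩ : Fin n), {(⟨1, by omega⟩ : Fin n)}),
        (mem_vertexSet_one _ _).2 ⟨Finset.singleton_nonempty _,
          Finset.singleton_subset_iff.2 (Finset.mem_univ _), Finset.mem_singleton_self _⟩, ?_⟩
      rw [myb_small _ (by simp only [Finset.card_singleton]; omega)]
      rfl
  · -- (4) no monochromatic top simplex
    intro s hs hcard
    obtain ⟨hne, hvert, hdist, hchain, hincl⟩ := (mem_chromSub_one _ s).1 hs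
    by_contra hmono
    push_neg at hmono
    have hinj : Set.InjOn Prod.fst (s : Set (ChromV n 1)) := by
      intro u hu v hv huv
      by_contra hne'
      exact hdist u hu v hv hne' huv
    have himg : s.image Prod.fst = Finset.univ := by
      apply Finset.eq_univ_of_card
      rw [Finset.card_image_of_injOn hinj, hcard, Fintype.card_fin]
    have hsurj : ∀ i : Fin n, ∃ v ∈ s, v.1 = i := by
      intro i
      have hmem : i ∈ s.image Prod.fst := by rw [himg]; exact Finset.mem_univ i
      obtain ⟨v, hv, hveq⟩ := Finset.mem_image.1 hmem
      exact ⟨v, hv, hveq⟩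
    have hcardle : ∀ v : Fin n × Finset (Fin n), v.2.card ≤ n := by
      intro v
      have := Finset.card_le_univ v.2
      rwa [Fintype.card_fin] at this
    obtain ⟨u, hu, humax'⟩ := s.exists_max_image (fun v => v.2.card) hne
    have humax : ∀ v ∈ s, v.2 ⊆ u.2 := by
      intro v hv
      rcases hchain v hv u hu with h | h
      · exact h
      · have heq := Finset.eq_of_subset_of_card_le h (humax' v hv)
        rw [heq]
    have huuniv : (u.2 : Finset (Fin n)) = Finset.univ := by
      apply Finset.eq_univ_iff_forall.2
      intro i
      obtain ⟨v, hv, rfl⟩ := hsurj i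
      exact humax v hv (hvert v hv).2
    have hbu : myb n u = if (u.1 : ℕ) = 0 then 1 else 0 :=
      myb_top u hn (by rw [huuniv, Finset.card_univ, Fintype.card_fin])
    by_cases hu0 : (u.1 : ℕ) = 0
    · -- all values are 1
      have hb1 : ∀ v ∈ s, myb n v = 1 := fun v hv =>
        (hmono v hv u hu).trans (by rw [hbu, if_pos hu0])
      have hs'ne : (s.erase u).Nonempty := by
        rw [← Finset.card_pos, Finset.card_erase_of_mem hu, hcard]; omega
      obtain ⟨w, hw', hwmax'⟩ := (s.erase u).exists_max_image (fun v => v.2.card) hs'ne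
      have hws : w ∈ s := Finset.mem_of_mem_erase hw'
      have hnotuniv : ∀ v ∈ s.erase u, (v.2 : Finset (Fin n)) ≠ Finset.univ := by
        intro v hv hvu
        have hb := hb1 v (Finset.mem_of_mem_erase hv)
        rw [myb_top v hn (by rw [hvu, Finset.card_univ, Fintype.card_fin])] at hb
        by_cases h : (v.1 : ℕ) = 0
        · exact hdist v (Finset.mem_of_mem_erase hv) u hu (Finset.ne_of_mem_erase hv)
            (Fin.ext (by rw [h, hu0]))
        · rw [if_neg h] at hb; exact absurd hb (by decide)
      have hwmax : ∀ v ∈ s.erase u, v.2 ⊆ w.2 := by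
        intro v hv
        rcases hchain v (Finset.mem_of_mem_erase hv) w hws with h | h
        · exact h
        · have heq := Finset.eq_of_subset_of_card_le h (hwmax' v hv)
          rw [heq]
      have hsub : Finset.univ.erase u.1 ⊆ (w.2 : Finset (Fin n)) := by
        intro i hi
        have hiu : i ≠ u.1 := Finset.ne_of_mem_erase hi
        obtain ⟨v, hv, rfl⟩ := hsurj i
        have hvne : v ≠ u := fun h => hiu (by rw [h])
        exact hwmax v (Finset.mem_erase.2 ⟨hvne, hv⟩) (hvert v hv).2
      have herasecard : (Finset.univ.erase u.1).card = n - 1 := by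
        rw [Finset.card_erase_of_mem (Finset.mem_univ _), Finset.card_univ, Fintype.card_fin]
      have hwcard : w.2.card = n - 1 := by
        have h1 : n - 1 ≤ w.2.card := herasecard ▸ Finset.card_le_card hsub
        have h2 : w.2.card ≤ n := hcardle w
        have h3 : w.2.card ≠ n := by
          intro h
          exact hnotuniv w hw'
            (Finset.eq_univ_of_card (α := Fin n) _ (by rw [Fintype.card_fin]; exact h))
        omega
      have hweq : (w.2 : Finset (Fin n)) = Finset.univ.erase u.1 :=
        (Finset.eq_of_subset_of_card_le hsub (by omega)).symm
      have hnoz : ¬ ∃ k : Fin n, k ∈ (w.2 : Finset (Fin n)) ∧ (k : ℕ) = 0 := by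
        rintro ⟨k, hk, hk0⟩
        rw [hweq] at hk
        exact Finset.ne_of_mem_erase hk (Fin.ext (by rw [hk0, hu0]))
      have hfin := myb_mid w hn hwcard
      rw [hb1 w hws, if_neg hnoz] at hfin
      exact absurd hfin (by decide)
    · -- all values are 0
      have hb0 : ∀ v ∈ s, myb n v = 0 := fun v hv =>
        (hmono v hv u hu).trans (by rw [hbu, if_neg hu0])
      obtain ⟨v₀, hv₀, hv₀1⟩ := hsurj ⟨0, by omega⟩
      have h0val : (v₀.1 : ℕ) = 0 := by rw [hv₀1]
      have hc1 : ¬ v₀.2.card ≤ n - 2 := by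
        intro h
        have h' : (0 : Fin 2) = 1 := by rw [← hb0 v₀ hv₀, myb_small v₀ h]
        exact absurd h' (by decide)
      have hc2 : v₀.2.card ≠ n := by
        intro h
        have h' := myb_top v₀ hn h
        rw [hb0 v₀ hv₀, if_pos h0val] at h'
        exact absurd h' (by decide)
      have hc3 : v₀.2.card = n - 1 := by have := hcardle v₀; omega
      have h0mem : (⟨0, by omega⟩ : Fin n) ∈ (v₀.2 : Finset (Fin n)) := by
        have := (hvert v₀ hv₀).2; rwa [hv₀1] at this
      have herne : (v₀.2.erase v₀.1).Nonempty := by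
        rw [← Finset.card_pos, Finset.card_erase_of_mem (hvert v₀ hv₀).2]; omega
      obtain ⟨j, hj⟩ := herne
      have hjmem : j ∈ v₀.2 := Finset.mem_of_mem_erase hj
      have hjne : j ≠ v₀.1 := Finset.ne_of_mem_erase hj
      obtain ⟨w, hw, hw1⟩ := hsurj j
      have hwsub : w.2 ⊆ v₀.2 := hincl w hw v₀ hv₀ (by rw [hw1]; exact hjmem)
      have hwc1 : ¬ w.2.card ≤ n - 2 := by
        intro h
        have h' : (0 : Fin 2) = 1 := by rw [← hb0 w hw, myb_small w h]
        exact absurd h' (by decide)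
      have hwc3 : w.2.card = n - 1 := by
        have := Finset.card_le_card hwsub; omega
      have hweq : (w.2 : Finset (Fin n)) = v₀.2 := Finset.eq_of_subset_of_card_le hwsub (by omega)
      have hex : ∃ k : Fin n, k ∈ (w.2 : Finset (Fin n)) ∧ (k : ℕ) = 0 :=
        ⟨⟨0, by omega⟩, by rw [hweq]; exact h0mem, rfl⟩
      have hw10 : (w.1 : ℕ) ≠ 0 := by
        rw [hw1]
        intro h
        exact hjne (Fin.ext (by rw [h, ← h0val]))
      have hfin := myb_mid w hn hwc3
      rw [hb0 w hw, if_pos hex, if_neg hw10] at hfin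
      exact absurd hfin (by decide)
end

section
/- For every n ≥ 3 and ℓ ≥ 1, if a coloring c of χ^{ℓ+1}(σ) with values in {0,…,n−1} is consistent and complete with the set agreement valency map val on χ^ℓ(σ), then c is a Sperner coloring of χ^{ℓ+1}(σ), i.e., c(v) ∈ carr({v}) for every vertex v of χ^{ℓ+1}(σ). -/
open scoped Classical

lemma color_mem_of_mem_chromSub (n : ℕ) (ρ : Finset (Fin n)) :
    ∀ ℓ, ∀ τ ∈ chromSub n ρ ℓ, ∀ v ∈ τ, chromCol n ℓ v ∈ ρ
  | 0, τ, hτ, v, hv => hτ.2 hv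
  | ℓ + 1, τ, hτ, v, hv => by
    obtain ⟨-, h2, -⟩ := hτ
    obtain ⟨hτ2, hcol⟩ := h2 v hv
    obtain ⟨w, hw, hwc⟩ := Finset.mem_image.1 hcol
    have := color_mem_of_mem_chromSub n ρ ℓ v.2 hτ2 w hw
    rw [hwc] at this
    exact this

/-- any coloring consistent and complete with the set agreement valency
map is a Sperner coloring. -/
theorem consistent_complete_is_sperner
    (n ℓ : ℕ) (hn : 3 ≤ n) (hℓ : 1 ≤ ℓ)
    (c : ChromV n (ℓ + 1) → Fin n)
    (hcons : ∀ τ' ∈ chromSub n Finset.univ ℓ, colorSet c (subOf 1 τ') ⊆ ↑(saVal τ'))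
    (hcomp : ∀ τ' ∈ chromSub n Finset.univ ℓ, colorSet c (subOf 1 τ') = ↑(saVal τ')) :
    ∀ v ∈ vertexSet (chromSub n Finset.univ (ℓ + 1)),
      c v ∈ carr ({v} : Finset (ChromV n (ℓ + 1))) := by
  intro v hv
  obtain ⟨s, hs, hvs⟩ := hv
  obtain ⟨-, h2, -⟩ := hs
  obtain ⟨hτ, hcol⟩ := h2 v hvs
  obtain ⟨w, hw, -⟩ := Finset.mem_image.1 hcol
  have hmem : c v ∈ colorSet c (subOf 1 v.2) := by
    refine ⟨v, ⟨{v}, ?_, Finset.mem_singleton_self v⟩, rfl⟩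
    refine ⟨⟨v, Finset.mem_singleton_self v⟩, ?_, ?_, ?_, ?_⟩
    · intro u hu
      have hu : u = v := Finset.mem_singleton.1 hu; subst hu
      exact ⟨⟨⟨w, hw⟩, subset_refl _⟩, hcol⟩
    · intro u hu x hx hne
      have hu : u = v := Finset.mem_singleton.1 hu
      have hx : x = v := Finset.mem_singleton.1 hx
      exact absurd (hu.trans hx.symm) hne
    · intro u hu x hx
      have hu : u = v := Finset.mem_singleton.1 hu
      have hx : x = v := Finset.mem_singleton.1 hx
      subst hu; subst hx; exact Or.inl (subset_refl _)
    · intro u hu x hx _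
      have hu : u = v := Finset.mem_singleton.1 hu
      have hx : x = v := Finset.mem_singleton.1 hx
      subst hu; subst hx; exact subset_refl _
  have h1 : c v ∈ (saVal v.2 : Finset (Fin n)) := hcons v.2 hτ hmem
  have hsub : ∀ i ∈ (saVal v.2 : Finset (Fin n)),
      i ∈ carr ({v} : Finset (ChromV n (ℓ + 1))) := by
    intro i hi
    rw [carr, Finset.mem_filter]
    refine ⟨Finset.mem_univ i, ?_⟩
    intro ρ hρ
    obtain ⟨-, h2', -⟩ := hρ
    obtain ⟨hτ', -⟩ := h2' v (Finset.mem_singleton_self v)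
    rw [saVal] at hi
    split_ifs at hi with hcard
    · obtain ⟨x, hx, hxc⟩ := Finset.mem_image.1 hi
      have := color_mem_of_mem_chromSub n ρ ℓ v.2 hτ' x hx
      rwa [hxc] at this
    · rw [carr, Finset.mem_filter] at hi
      exact hi.2 ρ hτ'
  exact hsub _ h1
end
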